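/- Let z ∈ R^N with ε ≤ |z_i| ≤ 1/ε for all i and ε > 1 - √3/2. Let C = z z^H + Δ with Δ symmetric, and set ε' = ε² + 2ε - 2 > 0. Suppose ||Δ|| ≤ (ε'/28) N and ||Δ||_∞ ≤ (ε'/28) N, and α ≤ ||Δ||. If x ∈ T^N is a fixed point of the generalized power iteration with C̃ = C + αI satisfying |z^H x| ≥ εN - 4(||Δ|| + α), then for every u ∈ C^N with u^H x = 0 and u ≠ 0, we have u^H S(x) u > 0, where S(x) = Re(ddiag(C x x^H)) - C; hence x is the global maximizer of x^H C x over T^N. -/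

import Mathlib

open Matrix Finset

noncomputable section

/-- entrywise sign with sgn(0)=1 -/
def sgn (r : ℝ) : ℝ := if r < 0 then -1 else 1

def l1 {n : ℕ} (x : Fin n → ℝ) : ℝ := ∑ i, |x i|
def l2sq {n : ℕ} (x : Fin n → ℝ) : ℝ := ∑ i, (x i) ^ 2
def l2 {n : ℕ} (x : Fin n → ℝ) : ℝ := Real.sqrt (l2sq x)

def cl1 {n : ℕ} (x : Fin n → ℂ) : ℝ := ∑ i, ‖x i‖
def cl2sq {n : ℕ} (x : Fin n → ℂ) : ℝ := ∑ i, Complex.normSq (x i)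
def cl2 {n : ℕ} (x : Fin n → ℂ) : ℝ := Real.sqrt (cl2sq x)

/-- spectral (ℓ2 operator) norm of a real square matrix -/
def opNorm {n : ℕ} (A : Matrix (Fin n) (Fin n) ℝ) : ℝ :=
  sSup {r | ∃ x : Fin n → ℝ, l2 x = 1 ∧ r = l2 (A.mulVec x)}

/-- spectral (ℓ2 operator) norm of a complex square matrix -/
def opNormC {n : ℕ} (A : Matrix (Fin n) (Fin n) ℂ) : ℝ :=
  sSup {r | ∃ x : Fin n → ℂ, cl2 x = 1 ∧ r = cl2 (A.mulVec x)}

/-- ℓ∞ operator norm (max absolute row sum) of a real square matrix -/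
def infNorm {n : ℕ} (A : Matrix (Fin n) (Fin n) ℝ) : ℝ := ⨆ i, ∑ j, |A i j|

/-- ℓ∞ operator norm (max absolute row sum) of a complex square matrix -/
def infNormC {n : ℕ} (A : Matrix (Fin n) (Fin n) ℂ) : ℝ := ⨆ i, ∑ j, ‖A i j‖

/-- complex torus: unit-modulus entries -/
def onTorus {n : ℕ} (x : Fin n → ℂ) : Prop := ∀ i, ‖x i‖ = 1

/-- real part of the Hermitian quadratic form x ↦ xᴴ C x -/
def quadC {n : ℕ} (C : Matrix (Fin n) (Fin n) ℂ) (x : Fin n → ℂ) : ℝ :=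
  (star x ⬝ᵥ C.mulVec x).re

/-- Riemannian-Hessian-type matrix S(x) = Re(ddiag(C x xᴴ)) - C -/
def Smat {N : ℕ} (C : Matrix (Fin N) (Fin N) ℂ) (x : Fin N → ℂ) :
    Matrix (Fin N) (Fin N) ℂ :=
  Matrix.diagonal (fun i => (((C.mulVec x) i * (starRingEnd ℂ) (x i)).re : ℂ)) - C

section Helpers

lemma l2sq_nonneg' {n : ℕ} (x : Fin n → ℝ) : 0 ≤ l2sq x :=
  Finset.sum_nonneg fun _ _ => sq_nonneg _

lemma l2_nonneg' {n : ℕ} (x : Fin n → ℝ) : 0 ≤ l2 x := Real.sqrt_nonneg _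

lemma l2_sq' {n : ℕ} (x : Fin n → ℝ) : (l2 x) ^ 2 = l2sq x :=
  Real.sq_sqrt (l2sq_nonneg' x)

lemma l2_zero' {n : ℕ} : l2 (0 : Fin n → ℝ) = 0 := by
  unfold l2 l2sq; simp

lemma l2_smul' {n : ℕ} (c : ℝ) (x : Fin n → ℝ) : l2 (c • x) = |c| * l2 x := by
  unfold l2 l2sq
  rw [← Real.sqrt_sq_eq_abs, ← Real.sqrt_mul (sq_nonneg c)]
  congr 1
  rw [Finset.mul_sum]
  exact Finset.sum_congr rfl fun i _ => by simp [mul_pow]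

lemma l2_eq_zero' {n : ℕ} {x : Fin n → ℝ} (h : l2 x = 0) : x = 0 := by
  have h2 : l2sq x = 0 := by
    have := l2_sq' x; rw [h] at this; simpa using this.symm
  funext i
  have := (Finset.sum_eq_zero_iff_of_nonneg (fun i _ => sq_nonneg (x i))).mp h2 i (Finset.mem_univ i)
  simpa using pow_eq_zero_iff (n := 2) (by norm_num) |>.mp this

lemma opNorm_bddAbove' {n : ℕ} (A : Matrix (Fin n) (Fin n) ℝ) :
    BddAbove {r | ∃ x : Fin n → ℝ, l2 x = 1 ∧ r = l2 (A.mulVec x)} := by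
  refine ⟨Real.sqrt (∑ i, ∑ j, (A i j)^2), ?_⟩
  rintro r ⟨x, hx, rfl⟩
  have hx2 : l2sq x = 1 := by rw [← l2_sq', hx]; norm_num
  unfold l2
  apply Real.sqrt_le_sqrt
  unfold l2sq
  calc ∑ i, (A.mulVec x i)^2 ≤ ∑ i, (∑ j, (A i j)^2) * (∑ j, (x j)^2) := by
        refine Finset.sum_le_sum fun i _ => ?_
        have h := Finset.sum_mul_sq_le_sq_mul_sq Finset.univ (fun j => A i j) x
        simpa [Matrix.mulVec, dotProduct] using h
    _ = ∑ i, ∑ j, (A i j)^2 := by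
        rw [← Finset.sum_mul]
        have h1 : (∑ j, (x j)^2) = 1 := hx2
        rw [Finset.sum_comm, h1, mul_one]

lemma l2_mulVec_le' {n : ℕ} (A : Matrix (Fin n) (Fin n) ℝ) (v : Fin n → ℝ) :
    l2 (A.mulVec v) ≤ opNorm A * l2 v := by
  by_cases hv : l2 v = 0
  · rw [l2_eq_zero' hv, Matrix.mulVec_zero]
    simp [l2_zero']
  · have hpos : 0 < l2 v := lt_of_le_of_ne (l2_nonneg' v) (Ne.symm hv)
    set c := (l2 v)⁻¹ with hc
    have hcpos : 0 < c := by positivity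
    have hcv : l2 (c • v) = 1 := by
      rw [l2_smul', abs_of_pos hcpos, hc, inv_mul_cancel₀ hv]
    have hmem : l2 (A.mulVec (c • v)) ∈
        {r | ∃ x : Fin n → ℝ, l2 x = 1 ∧ r = l2 (A.mulVec x)} := ⟨c • v, hcv, rfl⟩
    have hle := le_csSup (opNorm_bddAbove' A) hmem
    have heq : l2 (A.mulVec (c • v)) = c * l2 (A.mulVec v) := by
      rw [Matrix.mulVec_smul, l2_smul', abs_of_pos hcpos]
    rw [heq] at hle
    have h2 := mul_le_mul_of_nonneg_right hle hpos.le
    have h3 : c * l2 (A.mulVec v) * l2 v = l2 (A.mulVec v) := by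
      rw [hc]; field_simp
    rwa [h3] at h2

lemma dot_abs_le' {n : ℕ} (x y : Fin n → ℝ) : |x ⬝ᵥ y| ≤ l2 x * l2 y := by
  have h := Finset.sum_mul_sq_le_sq_mul_sq Finset.univ x y
  have h2 : (x ⬝ᵥ y)^2 ≤ (l2 x * l2 y)^2 := by
    rw [mul_pow, l2_sq', l2_sq']
    simpa [dotProduct, l2sq] using h
  have h3 := Real.sqrt_le_sqrt h2
  rw [Real.sqrt_sq_eq_abs, Real.sqrt_sq_eq_abs] at h3
  calc |x ⬝ᵥ y| ≤ |l2 x * l2 y| := h3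
    _ = l2 x * l2 y := abs_of_nonneg (mul_nonneg (l2_nonneg' x) (l2_nonneg' y))

lemma re_quad_bound' {n : ℕ} (A : Matrix (Fin n) (Fin n) ℝ) (u : Fin n → ℂ) :
    |(star u ⬝ᵥ (A.map (Complex.ofReal ·)).mulVec u).re| ≤
      opNorm A * ∑ i, Complex.normSq (u i) := by
  set a : Fin n → ℝ := fun i => (u i).re with ha
  set b : Fin n → ℝ := fun i => (u i).im with hb
  have key : (star u ⬝ᵥ (A.map (Complex.ofReal ·)).mulVec u).re
      = a ⬝ᵥ A.mulVec a + b ⬝ᵥ A.mulVec b := by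
    simp only [dotProduct, Matrix.mulVec, Pi.star_apply, Matrix.map_apply,
      Complex.re_sum, Finset.sum_mul, Finset.mul_sum]
    rw [← Finset.sum_add_distrib]
    refine Finset.sum_congr rfl fun i _ => ?_
    rw [← Finset.sum_add_distrib]
    refine Finset.sum_congr rfl fun j _ => ?_
    simp [Complex.mul_re, Complex.star_def, ha, hb]
  rw [key]
  have bnd : ∀ v : Fin n → ℝ, |v ⬝ᵥ A.mulVec v| ≤ opNorm A * l2sq v := by
    intro v
    calc |v ⬝ᵥ A.mulVec v| ≤ l2 v * l2 (A.mulVec v) := dot_abs_le' _ _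
      _ ≤ l2 v * (opNorm A * l2 v) :=
          mul_le_mul_of_nonneg_left (l2_mulVec_le' A v) (l2_nonneg' v)
      _ = opNorm A * l2sq v := by rw [← l2_sq']; ring
  have hsum : l2sq a + l2sq b = ∑ i, Complex.normSq (u i) := by
    unfold l2sq
    rw [← Finset.sum_add_distrib]
    exact Finset.sum_congr rfl fun i _ => by simp [Complex.normSq_apply, ha, hb, sq]
  calc |a ⬝ᵥ A.mulVec a + b ⬝ᵥ A.mulVec b| ≤ |a ⬝ᵥ A.mulVec a| + |b ⬝ᵥ A.mulVec b| :=
        abs_add_le _ _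
    _ ≤ opNorm A * l2sq a + opNorm A * l2sq b := add_le_add (bnd a) (bnd b)
    _ = opNorm A * ∑ i, Complex.normSq (u i) := by rw [← hsum]; ring

lemma sum_normSq_pos' {n : ℕ} {u : Fin n → ℂ} (hu : u ≠ 0) :
    0 < ∑ i, Complex.normSq (u i) := by
  have : ∃ i, u i ≠ 0 := by
    by_contra h
    push_neg at h
    exact hu (funext h)
  obtain ⟨i, hi⟩ := this
  exact Finset.sum_pos' (fun j _ => Complex.normSq_nonneg _)
    ⟨i, Finset.mem_univ i, Complex.normSq_pos.mpr hi⟩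

lemma normSq_sum_mul_le' {n : ℕ} (p u : Fin n → ℂ) :
    Complex.normSq (∑ i, p i * u i) ≤
      (∑ i, Complex.normSq (p i)) * (∑ i, Complex.normSq (u i)) := by
  have h1 : ‖∑ i, p i * u i‖ ≤ ∑ i, ‖p i‖ * ‖u i‖ := by
    calc ‖∑ i, p i * u i‖ ≤ ∑ i, ‖p i * u i‖ :=
          norm_sum_le _ _
      _ = ∑ i, ‖p i‖ * ‖u i‖ :=
          Finset.sum_congr rfl fun i _ => norm_mul _ _
  have h2 : (‖∑ i, p i * u i‖)^2
      ≤ (∑ i, ‖p i‖ * ‖u i‖)^2 :=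
    pow_le_pow_left₀ (norm_nonneg _) h1 2
  have h3 := Finset.sum_mul_sq_le_sq_mul_sq Finset.univ (fun i => ‖p i‖)
    (fun i => ‖u i‖)
  rw [← Complex.sq_norm]
  calc (‖∑ i, p i * u i‖)^2 ≤ (∑ i, ‖p i‖ * ‖u i‖)^2 := h2
    _ ≤ (∑ i, (‖p i‖)^2) * (∑ i, (‖u i‖)^2) := h3
    _ = (∑ i, Complex.normSq (p i)) * (∑ i, Complex.normSq (u i)) := by
        simp [Complex.sq_norm]

lemma abs_mulVec_le_infNorm' {n : ℕ} (A : Matrix (Fin n) (Fin n) ℝ) {x : Fin n → ℂ}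
    (hx : ∀ i, ‖x i‖ = 1) (i : Fin n) :
    ‖(A.map (Complex.ofReal ·)).mulVec x i‖ ≤ infNorm A := by
  have h1 : ‖(A.map (Complex.ofReal ·)).mulVec x i‖ ≤ ∑ j, |A i j| := by
    calc ‖(A.map (Complex.ofReal ·)).mulVec x i‖
        ≤ ∑ j, ‖(A i j : ℂ) * x j‖ := by
          simp only [Matrix.mulVec, dotProduct, Matrix.map_apply]
          exact norm_sum_le _ _
      _ = ∑ j, |A i j| := by
          refine Finset.sum_congr rfl fun j _ => ?_
          rw [norm_mul, hx j, mul_one, Complex.norm_real, Real.norm_eq_abs]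
  refine le_trans h1 ?_
  exact le_ciSup (f := fun i => ∑ j, |A i j|) (Set.Finite.bddAbove (Set.finite_range _)) i

lemma normSq_sub'' (a b : ℂ) :
    Complex.normSq (a - b) = Complex.normSq a - 2 * (a * (starRingEnd ℂ) b).re
      + Complex.normSq b := by
  simp [Complex.normSq_apply, Complex.mul_re, Complex.sub_re, Complex.sub_im]
  ring

end Helpers
set_option maxHeartbeats 4000000 in
theorem stmt_8 {N : ℕ} (z : Fin N → ℝ) (ε : ℝ) (hε1 : 1 - Real.sqrt 3 / 2 < ε)
    (hz : ∀ i, ε ≤ |z i| ∧ |z i| ≤ 1 / ε)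
    (Δ : Matrix (Fin N) (Fin N) ℝ) (hΔ : Δ.IsSymm)
    (ε' : ℝ) (hε' : ε' = ε ^ 2 + 2 * ε - 2) (hε'pos : 0 < ε')
    (hΔop : opNorm Δ ≤ ε' / 28 * N) (hΔinf : infNorm Δ ≤ ε' / 28 * N)
    (α : ℝ) (hα0 : 0 ≤ α) (hα : α ≤ opNorm Δ)
    (C : Matrix (Fin N) (Fin N) ℂ)
    (hC : C = Matrix.of (fun i j => ((z i * z j : ℝ) : ℂ)) + Δ.map (Complex.ofReal ·))
    (x : Fin N → ℂ) (hx : onTorus x)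
    (hfix : ∀ i, ((C + (α : ℂ) • (1 : Matrix (Fin N) (Fin N) ℂ)).mulVec x) i *
        (starRingEnd ℂ) (x i) =
        (‖((C + (α : ℂ) • (1 : Matrix (Fin N) (Fin N) ℂ)).mulVec x) i‖ : ℂ))
    (hgood : ε * N - 4 * (opNorm Δ + α) ≤ ‖(fun i => (z i : ℂ)) ⬝ᵥ x‖) :
    (∀ u : Fin N → ℂ, u ≠ 0 → star u ⬝ᵥ x = 0 → 0 < quadC (Smat C x) u) ∧
      (∀ y : Fin N → ℂ, onTorus y → quadC C y ≤ quadC C x) := by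
  classical
  rcases Nat.eq_zero_or_pos N with h0 | hNpos
  · subst h0
    constructor
    · intro u hu _
      exact absurd (Subsingleton.elim u 0) hu
    · intro y _
      simp [quadC, dotProduct]
  -- main case N ≥ 1
  have hNR : (0:ℝ) < N := by exact_mod_cast hNpos
  have hNC : (N:ℂ) ≠ 0 := by exact_mod_cast Nat.pos_iff_ne_zero.mp hNpos
  -- basic bounds on ε
  have hεpos : 0 < ε := by
    have h3 : Real.sqrt 3 < 2 := by
      nlinarith [Real.sq_sqrt (by norm_num : (3:ℝ) ≥ 0), Real.sqrt_nonneg 3]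
    nlinarith
  have hε2 : ε ≤ 1 := by
    obtain ⟨h1, h2⟩ := hz ⟨0, hNpos⟩
    have : ε ≤ 1 / ε := le_trans h1 h2
    rw [le_div_iff₀ hεpos] at this
    nlinarith
  have h2ε : 1 ≤ 2 * ε^2 := by
    nlinarith [hε'pos, hε', hεpos, hε2, sq_nonneg (2*ε - 3), sq_nonneg (ε - 1)]
  -- notation
  set δ : ℝ := ε' / 28 * N with hδdef
  have hδ0 : 0 ≤ δ := by positivity
  have hαδ : α ≤ δ := le_trans hα hΔop
  set w : Fin N → ℝ := fun i => |z i| with hwdef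
  set Δc : Matrix (Fin N) (Fin N) ℂ := Δ.map (Complex.ofReal ·) with hΔcdef
  set ξ : ℂ := (fun i => (z i : ℂ)) ⬝ᵥ x with hξdef
  set ρ : ℝ := ‖ξ‖ with hρdef
  set t : ℝ := ∑ i, w i with htdef
  set cx : Fin N → ℂ := C.mulVec x with hcxdef
  set s : ℝ := ∑ i, (z i)^2 with hsdef
  set D : Fin N → ℝ :=
    fun i => ‖((C + (α : ℂ) • (1 : Matrix (Fin N) (Fin N) ℂ)).mulVec x) i‖ - α
    with hDdef
  have hρ0 : 0 ≤ ρ := norm_nonneg _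
  have hw : ∀ i, ε ≤ w i ∧ ε * w i ≤ 1 := by
    intro i
    refine ⟨(hz i).1, ?_⟩
    have := (hz i).2
    rw [le_div_iff₀ hεpos] at this
    nlinarith
  -- torus facts
  have hxc : ∀ i, x i * (starRingEnd ℂ) (x i) = 1 := by
    intro i
    rw [Complex.mul_conj]
    norm_cast
    rw [← Complex.sq_norm, hx i, one_pow]
  -- mulVec of C + αI
  have hmv : ∀ i, ((C + (α : ℂ) • (1 : Matrix (Fin N) (Fin N) ℂ)).mulVec x) i
      = cx i + (α : ℂ) * x i := by
    intro i
    rw [Matrix.add_mulVec, Matrix.smul_mulVec, Matrix.one_mulVec]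
    simp [hcxdef]
  -- the fixed point identity
  have hfix' : ∀ i, cx i * (starRingEnd ℂ) (x i) = (D i : ℂ) := by
    intro i
    have h := hfix i
    rw [hmv i] at h
    simp only [hDdef]
    rw [hmv i]
    push_cast
    linear_combination h - (α:ℂ) * hxc i
  have hDre : ∀ i, (cx i * (starRingEnd ℂ) (x i)).re = D i := by
    intro i; rw [hfix' i, Complex.ofReal_re]
  -- decomposition of C mulVec x
  have hcxi : ∀ i, cx i = (z i : ℂ) * ξ + Δc.mulVec x i := by
    intro i
    rw [hcxdef, hC]
    rw [Matrix.add_mulVec]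
    simp only [Pi.add_apply]
    congr 1
    simp only [Matrix.mulVec, dotProduct, Matrix.of_apply, hξdef]
    rw [Finset.mul_sum]
    push_cast
    exact Finset.sum_congr rfl fun j _ => by ring
  -- row bound on Δ x
  have habsΔx : ∀ i, ‖Δc.mulVec x i‖ ≤ δ :=
    fun i => le_trans (abs_mulVec_le_infNorm' Δ hx i) hΔinf
  -- D lower bound
  have hD : ∀ i, w i * ρ - 3*δ ≤ D i := by
    intro i
    have h1 : ‖(z i : ℂ) * ξ‖ = w i * ρ := by
      rw [norm_mul, Complex.norm_real, Real.norm_eq_abs, hwdef]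
    have h2 : ‖Δc.mulVec x i + (α:ℂ) * x i‖ ≤ δ + α := by
      calc ‖Δc.mulVec x i + (α:ℂ) * x i‖
          ≤ ‖Δc.mulVec x i‖ + ‖(α:ℂ) * x i‖ := norm_add_le _ _
        _ ≤ δ + α := by
            refine add_le_add (habsΔx i) ?_
            simp [norm_mul, hx i, Complex.norm_real, Real.norm_eq_abs, abs_of_nonneg hα0]
    have h3 : ((z i : ℂ) * ξ) = (cx i + (α:ℂ) * x i) - (Δc.mulVec x i + (α:ℂ) * x i) := by
      rw [hcxi i]; ring
    have h4 : w i * ρ - (δ + α)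
        ≤ ‖cx i + (α:ℂ) * x i‖ := by
      have h5 := norm_sub_le (cx i + (α:ℂ) * x i) (Δc.mulVec x i + (α:ℂ) * x i)
      rw [← h3, h1] at h5
      linarith
    have h6 : D i = ‖cx i + (α:ℂ) * x i‖ - α := by
      simp only [hDdef]; rw [hmv i]
    rw [h6]
    have := hαδ
    linarith
  -- alignment bound
  have halign : ∀ i, w i * ρ - 4*δ ≤ ((starRingEnd ℂ) ξ * ((z i : ℂ) * x i)).re := by
    intro i
    have h1 : (z i : ℂ) * ξ * (starRingEnd ℂ) (x i)
        = (D i : ℂ) - Δc.mulVec x i * (starRingEnd ℂ) (x i) := by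
      rw [← hfix' i, hcxi i]; ring
    have h2 : |(Δc.mulVec x i * (starRingEnd ℂ) (x i)).re| ≤ δ := by
      calc |(Δc.mulVec x i * (starRingEnd ℂ) (x i)).re|
          ≤ ‖Δc.mulVec x i * (starRingEnd ℂ) (x i)‖ := Complex.abs_re_le_norm _
        _ = ‖Δc.mulVec x i‖ := by
            rw [norm_mul, Complex.norm_conj, hx i, mul_one]
        _ ≤ δ := habsΔx i
    have h3 : ((z i : ℂ) * ξ * (starRingEnd ℂ) (x i)).re
        = D i - (Δc.mulVec x i * (starRingEnd ℂ) (x i)).re := by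
      rw [h1, Complex.sub_re, Complex.ofReal_re]
    have h4 : ((starRingEnd ℂ) ξ * ((z i : ℂ) * x i)).re
        = ((z i : ℂ) * ξ * (starRingEnd ℂ) (x i)).re := by
      rw [← Complex.conj_re ((starRingEnd ℂ) ξ * ((z i : ℂ) * x i))]
      congr 1
      simp only [_root_.map_mul, Complex.conj_conj, Complex.conj_ofReal]
      ring
    rw [h4, h3]
    have h5 := hD i
    have h6 := abs_le.mp h2
    linarith
  -- sum of alignment
  have hsumalign : ∑ i, ((starRingEnd ℂ) ξ * ((z i : ℂ) * x i)).re = ρ^2 := by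
    rw [← Complex.re_sum]
    rw [← Finset.mul_sum]
    have : ∑ i, (z i : ℂ) * x i = ξ := by
      rw [hξdef]; simp [dotProduct]
    rw [this]
    have : (starRingEnd ℂ) ξ * ξ = (Complex.normSq ξ : ℂ) := by
      rw [mul_comm, Complex.mul_conj]
    rw [this, Complex.ofReal_re, hρdef, Complex.sq_norm]
  have hρtρ : ρ * t - ρ^2 ≤ 4*δ*N := by
    have h1 : ∑ i, (w i * ρ - ((starRingEnd ℂ) ξ * ((z i : ℂ) * x i)).re) ≤ ∑ _i : Fin N, 4*δ :=
      Finset.sum_le_sum fun i _ => by have := halign i; linarith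
    rw [Finset.sum_sub_distrib, hsumalign, ← Finset.sum_mul, ← htdef] at h1
    rw [Finset.sum_const, Finset.card_univ, Fintype.card_fin, nsmul_eq_mul] at h1
    rw [mul_comm ρ t]
    calc t * ρ - ρ^2 ≤ N * (4*δ) := h1
      _ = 4*δ*N := by ring
  have hρt : ρ ≤ t := by
    rw [hρdef, hξdef, htdef]
    calc ‖(fun i => (z i : ℂ)) ⬝ᵥ x‖ ≤ ∑ i, ‖(z i : ℂ) * x i‖ := by
          simp only [dotProduct]
          exact norm_sum_le _ _
      _ = ∑ i, w i := Finset.sum_congr rfl fun i _ => by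
          rw [norm_mul, hx i, mul_one, Complex.norm_real, Real.norm_eq_abs, hwdef]
  have hεt : ε * t ≤ N := by
    rw [htdef, Finset.mul_sum]
    calc ∑ i, ε * w i ≤ ∑ _i : Fin N, (1:ℝ) := Finset.sum_le_sum fun i _ => (hw i).2
      _ = N := by simp
  have htlow : ε * N ≤ t := by
    rw [htdef]
    calc ε * N = ∑ _i : Fin N, ε := by rw [Finset.sum_const, Finset.card_univ,
          Fintype.card_fin, nsmul_eq_mul]; ring
      _ ≤ ∑ i, w i := Finset.sum_le_sum fun i _ => (hw i).1
  have hρlow : ε * N - 8*δ ≤ ρ := by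
    have : opNorm Δ + α ≤ 2*δ := by
      have := hΔop; have := hαδ; linarith
    rw [hρdef, hξdef]
    calc ε * N - 8*δ ≤ ε * N - 4*(opNorm Δ + α) := by linarith
      _ ≤ ‖(fun i => (z i : ℂ)) ⬝ᵥ x‖ := hgood
  -- bound on s
  have hslow : s * N ≤ ε*t*N + t^2 - ε^2*N^2 := by
    set d : Fin N → ℝ := fun i => w i - ε with hddef
    have hd0 : ∀ i, 0 ≤ d i := fun i => by
      have := (hw i).1; simp only [hddef]; linarith
    have hdε : ∀ i, d i ≤ ε := by
      intro i
      have h1 : ε * d i ≤ ε * ε := by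
        have := (hw i).2
        simp only [hddef]
        nlinarith [h2ε]
      exact le_of_mul_le_mul_left h1 hεpos
    have hsd : ∑ i, (d i)^2 ≤ ε * ∑ i, d i := by
      rw [Finset.mul_sum]
      exact Finset.sum_le_sum fun i _ => by nlinarith [hd0 i, hdε i]
    have ht2 : t = ε*N + ∑ i, d i := by
      rw [htdef]
      have : ∀ i, w i = ε + d i := fun i => by simp [hddef]
      rw [Finset.sum_congr rfl fun i _ => this i, Finset.sum_add_distrib,
        Finset.sum_const, Finset.card_univ, Fintype.card_fin, nsmul_eq_mul]
      ring
    have hs2 : s = ε^2*N + 2*ε*(∑ i, d i) + ∑ i, (d i)^2 := by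
      rw [hsdef]
      have hzw : ∀ i, (z i)^2 = ε^2 + 2*ε*(d i) + (d i)^2 := by
        intro i
        have h2 : w i = ε + d i := by simp [hddef]
        have h3 : (z i)^2 = (w i)^2 := by rw [hwdef]; exact (sq_abs (z i)).symm
        rw [h3, h2]; ring
      rw [Finset.sum_congr rfl fun i _ => hzw i, Finset.sum_add_distrib,
        Finset.sum_add_distrib, Finset.sum_const, Finset.card_univ, Fintype.card_fin,
        nsmul_eq_mul, ← Finset.mul_sum]
      ring
    have key : s*N - (ε*t*N + t^2 - ε^2*N^2)
        = (∑ i, (d i)^2)*N - ε*(∑ i, d i)*N - (∑ i, d i)^2 := by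
      rw [ht2, hs2]; ring
    nlinarith [mul_le_mul_of_nonneg_right hsd hNR.le, sq_nonneg (∑ i, d i), key]
  -- quadratic form identity
  have hquadS : ∀ v : Fin N → ℂ,
      quadC (Smat C x) v = (∑ i, D i * Complex.normSq (v i)) - quadC C v := by
    intro v
    show (star v ⬝ᵥ (Smat C x).mulVec v).re = _
    unfold Smat
    rw [Matrix.sub_mulVec, dotProduct_sub, Complex.sub_re, ← hcxdef]
    congr 1
    simp only [dotProduct, Matrix.mulVec_diagonal, Pi.star_apply, Complex.star_def]
    rw [Complex.re_sum]
    refine Finset.sum_congr rfl fun i _ => ?_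
    rw [hDre i]
    have h1 : (starRingEnd ℂ) (v i) * ((D i:ℂ) * v i)
        = ((D i * Complex.normSq (v i) : ℝ) : ℂ) := by
      push_cast
      rw [← Complex.mul_conj]
      ring
    rw [h1, Complex.ofReal_re]
  set Nc : ℂ := ((N:ℝ):ℂ) with hNcdef
  have hNcne : Nc ≠ 0 := by
    rw [hNcdef]
    exact_mod_cast ne_of_gt hNR
  have hnx : ∀ i, Complex.normSq (x i) = 1 := by
    intro i
    rw [← Complex.sq_norm, hx i, one_pow]
  -- PART A
  have partA : ∀ u : Fin N → ℂ, u ≠ 0 → star u ⬝ᵥ x = 0 → 0 < quadC (Smat C x) u := by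
    intro u hu hux
    have hnsq : 0 < ∑ i, Complex.normSq (u i) := sum_normSq_pos' hu
    set nsq : ℝ := ∑ i, Complex.normSq (u i) with hnsqdef
    set ζ : ℂ := ∑ i, (z i : ℂ) * u i with hζdef
    -- C quadratic form on u
    have hCu : quadC C u = Complex.normSq ζ + (star u ⬝ᵥ Δc.mulVec u).re := by
      show (star u ⬝ᵥ C.mulVec u).re = _
      rw [hC, Matrix.add_mulVec, dotProduct_add, Complex.add_re]
      congr 1
      have hconj : (starRingEnd ℂ) ζ = ∑ i, (z i : ℂ) * (starRingEnd ℂ) (u i) := by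
        rw [hζdef, map_sum]
        exact Finset.sum_congr rfl fun i _ => by
          rw [_root_.map_mul, Complex.conj_ofReal]
      have h1 : star u ⬝ᵥ (Matrix.of (fun i j => ((z i * z j : ℝ) : ℂ))).mulVec u
          = (starRingEnd ℂ) ζ * ζ := by
        simp only [dotProduct, Matrix.mulVec, Matrix.of_apply, Pi.star_apply,
          Complex.star_def]
        rw [hconj, Finset.sum_mul]
        refine Finset.sum_congr rfl fun i _ => ?_
        rw [Finset.mul_sum, hζdef, Finset.mul_sum]
        refine Finset.sum_congr rfl fun j _ => ?_
        push_cast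
        ring
      rw [h1, mul_comm, Complex.mul_conj, Complex.ofReal_re]
    -- orthogonality
    have horth : ∑ i, (starRingEnd ℂ) (x i) * u i = 0 := by
      have h1 : (starRingEnd ℂ) (star u ⬝ᵥ x) = 0 := by rw [hux, map_zero]
      rw [← h1]
      simp only [dotProduct, Pi.star_apply, Complex.star_def, map_sum]
      exact Finset.sum_congr rfl fun i _ => by
        rw [_root_.map_mul, Complex.conj_conj]; ring
    -- projected vector
    set p : Fin N → ℂ := fun i => (z i : ℂ) - ξ / Nc * (starRingEnd ℂ) (x i) with hpdef
    have hζp : ζ = ∑ i, p i * u i := by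
      simp only [hpdef, sub_mul]
      rw [Finset.sum_sub_distrib]
      have h0 : ∑ i, ξ / Nc * (starRingEnd ℂ) (x i) * u i = 0 := by
        calc ∑ i, ξ / Nc * (starRingEnd ℂ) (x i) * u i
            = ξ / Nc * ∑ i, (starRingEnd ℂ) (x i) * u i := by
              rw [Finset.mul_sum]
              exact Finset.sum_congr rfl fun i _ => by ring
          _ = 0 := by rw [horth, mul_zero]
      rw [h0, sub_zero, hζdef]
    have hcalc : ∀ i, Complex.normSq (p i)
        = (z i)^2 - 2 * ((starRingEnd ℂ) ξ / Nc * ((z i:ℂ) * x i)).re + ρ^2/N^2 := by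
      intro i
      simp only [hpdef]
      rw [normSq_sub'']
      have e1 : Complex.normSq ((z i : ℂ)) = (z i)^2 := by
        rw [Complex.normSq_ofReal]; ring
      have e2 : ((z i:ℂ) * (starRingEnd ℂ) (ξ / Nc * (starRingEnd ℂ) (x i)))
          = (starRingEnd ℂ) ξ / Nc * ((z i:ℂ) * x i) := by
        rw [_root_.map_mul, map_div₀, Complex.conj_conj]
        rw [hNcdef, Complex.conj_ofReal]
        ring
      have e3 : Complex.normSq (ξ / Nc * (starRingEnd ℂ) (x i)) = ρ^2/N^2 := by
        rw [Complex.normSq_mul, Complex.normSq_conj, hnx i, mul_one,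
          Complex.normSq_div, hρdef, ← Complex.sq_norm]
        rw [hNcdef, Complex.normSq_ofReal]
        ring
      rw [e1, e2, e3]
    have hsum1 : ∑ i, ((starRingEnd ℂ) ξ / Nc * ((z i:ℂ) * x i)).re = ρ^2/N := by
      rw [← Complex.re_sum, ← Finset.mul_sum]
      have hξs : ∑ i, (z i : ℂ) * x i = ξ := by
        rw [hξdef]; simp [dotProduct]
      rw [hξs]
      have h0 : (starRingEnd ℂ) ξ / Nc * ξ = ((ρ^2/N : ℝ) : ℂ) := by
        rw [div_mul_eq_mul_div, mul_comm, Complex.mul_conj]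
        rw [hNcdef, hρdef, ← Complex.sq_norm]
        rw [Complex.ofReal_div]
      rw [h0]
      exact Complex.ofReal_re _
    have hp2 : (∑ i, Complex.normSq (p i)) * N = s * N - ρ^2 := by
      rw [Finset.sum_congr rfl fun i _ => hcalc i]
      rw [Finset.sum_add_distrib, Finset.sum_sub_distrib, ← Finset.mul_sum, hsum1,
        ← hsdef, Finset.sum_const, Finset.card_univ, Fintype.card_fin, nsmul_eq_mul]
      field_simp
      ring
    -- Cauchy-Schwarz
    have hcs : Complex.normSq ζ * N ≤ (s*N - ρ^2) * nsq := by
      have h := normSq_sum_mul_le' p u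
      rw [← hζp, ← hnsqdef] at h
      calc Complex.normSq ζ * N ≤ ((∑ i, Complex.normSq (p i)) * nsq) * N :=
            mul_le_mul_of_nonneg_right h hNR.le
        _ = (s*N - ρ^2) * nsq := by rw [← hp2]; ring
    -- diagonal bound
    have hdiag : (ε*ρ - 3*δ) * nsq ≤ ∑ i, D i * Complex.normSq (u i) := by
      rw [hnsqdef, Finset.mul_sum]
      refine Finset.sum_le_sum fun i _ => ?_
      have h1 := hD i
      have h2 : ε * ρ ≤ w i * ρ := mul_le_mul_of_nonneg_right (hw i).1 hρ0
      have h3 := Complex.normSq_nonneg (u i)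
      nlinarith
    -- Delta bound
    have hΔu : (star u ⬝ᵥ Δc.mulVec u).re ≤ δ * nsq := by
      have h := re_quad_bound' Δ u
      rw [← hnsqdef] at h
      have h2 := (abs_le.mp h).2
      have h3 : opNorm Δ * nsq ≤ δ * nsq := mul_le_mul_of_nonneg_right hΔop hnsq.le
      calc (star u ⬝ᵥ Δc.mulVec u).re ≤ opNorm Δ * nsq := h2
        _ ≤ δ * nsq := h3
    -- positivity of the geometric quantity
    have hρpos : 0 < ρ := by
      have h7 : ε*N - 8*δ = (-2*ε^2+3*ε+4)/7 * N := by rw [hδdef, hε']; ring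
      have hq : (0:ℝ) < -2*ε^2+3*ε+4 := by nlinarith
      have h8 : 0 < (-2*ε^2+3*ε+4)/7 * N :=
        mul_pos (by linarith : (0:ℝ) < (-2*ε^2+3*ε+4)/7) hNR
      linarith [hρlow]
    have hX : 0 < ε*ρ*N + ρ^2 - s*N - 4*δ*N := by
      have h1 : ε^2*N^2 - (t-ρ)*(ε*N + t + ρ) ≤ ε*ρ*N + ρ^2 - s*N := by
        have e : ε^2*N^2 - (t-ρ)*(ε*N + t + ρ)
            = ε*ρ*N + ρ^2 - (ε*t*N + t^2 - ε^2*N^2) := by ring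
        linarith [hslow]
      have he2 : ε^2 ≤ 1 := by nlinarith
      have h2 : ε*(ε*N + t + ρ) ≤ 3*N := by
        have hεp : ε*ρ ≤ ε*t := mul_le_mul_of_nonneg_left hρt hεpos.le
        have hN2 : ε^2*N ≤ N := by nlinarith
        nlinarith [hεt]
      have htρ : 0 ≤ t - ρ := by linarith [hρt]
      have h4 : ε*ρ*((t-ρ)*(ε*N + t + ρ)) ≤ 12*δ*N^2 := by
        calc ε*ρ*((t-ρ)*(ε*N+t+ρ)) = (ρ*(t-ρ)) * (ε*(ε*N+t+ρ)) := by ring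
          _ ≤ (ρ*(t-ρ)) * (3*N) := mul_le_mul_of_nonneg_left h2 (mul_nonneg hρ0 htρ)
          _ ≤ (4*δ*N) * (3*N) := by
              refine mul_le_mul_of_nonneg_right ?_ (by positivity)
              nlinarith [hρtρ]
          _ = 12*δ*N^2 := by ring
      have h5 : 0 ≤ ε^2*N^2 - 4*δ*N := by
        rw [hδdef, hε']
        have hc1 : (0:ℝ) ≤ 6*ε^2-2*ε+2 := by nlinarith [sq_nonneg (6*ε-1)]
        linarith [mul_nonneg (mul_pos hNR hNR).le hc1]
      have h6 : 0 < ε*(ε*N-8*δ)*(ε^2*N^2-4*δ*N) - 12*δ*N^2 := by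
        rw [hδdef, hε']
        have he3 : ε^3 ≤ 1 := by nlinarith [he2, hεpos]
        have hR : (0:ℝ) ≤ -12*ε^3-2*ε^2+22*ε+23 := by linarith
        have hP : (0:ℝ) ≤ 12*ε^4-10*ε^3-24*ε^2-ε+33 := by
          linarith [mul_nonneg (sub_nonneg.2 hε2) hR]
        have hG : (0:ℝ) < -12*ε^5+22*ε^4+14*ε^3-23*ε^2-34*ε+42 := by
          linarith [mul_nonneg (sub_nonneg.2 hε2) hP]
        have hN3 : (0:ℝ) < (N:ℝ)^3 := by positivity
        linarith [mul_pos hN3 hG]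
      have h7 : ε*(ε*N-8*δ)*(ε^2*N^2-4*δ*N) ≤ ε*ρ*(ε^2*N^2-4*δ*N) := by
        refine mul_le_mul_of_nonneg_right ?_ h5
        exact mul_le_mul_of_nonneg_left hρlow hεpos.le
      have h1m := mul_le_mul_of_nonneg_left h1 (mul_nonneg hεpos.le hρ0)
      have h8 : 0 < ε*ρ*(ε*ρ*N + ρ^2 - s*N - 4*δ*N) := by linarith [h1m, h4, h6, h7]
      by_contra hc
      push_neg at hc
      nlinarith [h8, mul_pos hεpos hρpos]
    -- conclude
    rw [hquadS u, hCu]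
    have hgoalN : 0 < ((∑ i, D i * Complex.normSq (u i))
        - (Complex.normSq ζ + (star u ⬝ᵥ Δc.mulVec u).re)) * N := by
      have hd := mul_le_mul_of_nonneg_right hdiag hNR.le
      have hΔN := mul_le_mul_of_nonneg_right hΔu hNR.le
      linarith [hcs, mul_pos hX hnsq, hd, hΔN]
    by_contra hc
    push_neg at hc
    nlinarith [hgoalN, hNR, hc]
  -- PART B
  have hSx : ∀ j, (Smat C x).mulVec x j = 0 := by
    intro j
    unfold Smat
    rw [Matrix.sub_mulVec]
    simp only [Pi.sub_apply]
    rw [Matrix.mulVec_diagonal, ← hcxdef, hDre j]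
    have h : (D j : ℂ) * x j = cx j := by
      rw [← hfix' j]
      calc cx j * (starRingEnd ℂ) (x j) * x j = cx j * (x j * (starRingEnd ℂ) (x j)) := by ring
        _ = cx j := by rw [hxc j, mul_one]
    rw [h, sub_self]
  have hherm : ∀ i j, (starRingEnd ℂ) (Smat C x i j) = Smat C x j i := by
    intro i j
    unfold Smat
    simp only [Matrix.sub_apply, map_sub]
    congr 1
    · by_cases h : i = j
      · subst h; simp [Matrix.diagonal_apply_eq, Complex.conj_ofReal]
      · rw [Matrix.diagonal_apply_ne _ h, Matrix.diagonal_apply_ne _ (Ne.symm h), map_zero]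
    · rw [hC]
      simp only [Matrix.add_apply, Matrix.of_apply, hΔcdef, Matrix.map_apply, map_add,
        Complex.conj_ofReal]
      have hsym : Δ i j = Δ j i := (congrFun (congrFun hΔ i) j).symm
      rw [hsym, mul_comm]
  have hquadCx : quadC C x = ∑ i, D i := by
    have h1 := hquadS x
    have h2 : quadC (Smat C x) x = 0 := by
      show (star x ⬝ᵥ (Smat C x).mulVec x).re = 0
      have h0 : star x ⬝ᵥ (Smat C x).mulVec x = 0 := by
        simp only [dotProduct]
        refine Finset.sum_eq_zero fun i _ => ?_
        rw [hSx i, mul_zero]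
      rw [h0, Complex.zero_re]
    have h3 : ∑ i, D i * Complex.normSq (x i) = ∑ i, D i :=
      Finset.sum_congr rfl fun i _ => by rw [hnx i, mul_one]
    rw [h2, h3] at h1
    linarith
  refine ⟨partA, ?_⟩
  intro y hy
  set cc : ℂ := (star x ⬝ᵥ y) / Nc with hccdef
  set u : Fin N → ℂ := y - cc • x with hudef
  have huy : ∀ i, y i = u i + cc * x i := by
    intro i; simp [hudef]
  have hu_orth : star u ⬝ᵥ x = 0 := by
    simp only [dotProduct, Pi.star_apply, Complex.star_def, hudef, Pi.sub_apply,
      Pi.smul_apply, smul_eq_mul]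
    have expand : ∀ i, (starRingEnd ℂ) (y i - cc * x i) * x i
        = (starRingEnd ℂ) (y i) * x i - (starRingEnd ℂ) cc * ((starRingEnd ℂ) (x i) * x i) := by
      intro i; rw [map_sub, _root_.map_mul]; ring
    rw [Finset.sum_congr rfl fun i _ => expand i, Finset.sum_sub_distrib, ← Finset.mul_sum]
    have hxx : ∑ i, (starRingEnd ℂ) (x i) * x i = Nc := by
      have h1 : ∀ i, (starRingEnd ℂ) (x i) * x i = 1 := fun i => by
        rw [mul_comm]; exact hxc i
      rw [Finset.sum_congr rfl fun i _ => h1 i, Finset.sum_const, Finset.card_univ,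
        Fintype.card_fin, hNcdef]
      simp
    rw [hxx]
    have hccstar : (starRingEnd ℂ) cc = (star y ⬝ᵥ x) / Nc := by
      rw [hccdef, map_div₀]
      congr 1
      · simp only [dotProduct, map_sum, Pi.star_apply, Complex.star_def]
        exact Finset.sum_congr rfl fun i _ => by
          rw [_root_.map_mul, Complex.conj_conj]; ring
      · rw [hNcdef, Complex.conj_ofReal]
    rw [hccstar, div_mul_cancel₀ _ hNcne]
    simp [dotProduct]
  have hxSu : star x ⬝ᵥ (Smat C x).mulVec u = 0 := by
    simp only [dotProduct, Matrix.mulVec, Pi.star_apply, Complex.star_def,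
      Finset.mul_sum]
    rw [Finset.sum_comm]
    refine Finset.sum_eq_zero fun j _ => ?_
    have e1 : ∑ i, (starRingEnd ℂ) (x i) * (Smat C x i j * u j)
        = (∑ i, (starRingEnd ℂ) (Smat C x j i * x i)) * u j := by
      rw [Finset.sum_mul]
      refine Finset.sum_congr rfl fun i _ => ?_
      rw [_root_.map_mul, hherm j i]
      ring
    rw [e1]
    have e2 : ∑ i, (starRingEnd ℂ) (Smat C x j i * x i)
        = (starRingEnd ℂ) ((Smat C x).mulVec x j) := by
      rw [← map_sum]
      congr 1
    rw [e2, hSx j, map_zero, zero_mul]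
  have hSu_eq : quadC (Smat C x) y = quadC (Smat C x) u := by
    show (star y ⬝ᵥ (Smat C x).mulVec y).re = (star u ⬝ᵥ (Smat C x).mulVec u).re
    have hy_eq : (Smat C x).mulVec y = (Smat C x).mulVec u := by
      have hdec : y = u + cc • x := by funext i; rw [huy i]; simp
      rw [hdec, Matrix.mulVec_add, Matrix.mulVec_smul]
      funext j
      simp [hSx j]
    rw [hy_eq]
    have split : star y ⬝ᵥ (Smat C x).mulVec u
        = star u ⬝ᵥ (Smat C x).mulVec u
          + (starRingEnd ℂ) cc * (star x ⬝ᵥ (Smat C x).mulVec u) := by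
      simp only [dotProduct, Pi.star_apply, Complex.star_def, Finset.mul_sum]
      rw [← Finset.sum_add_distrib]
      refine Finset.sum_congr rfl fun i _ => ?_
      rw [huy i, map_add, _root_.map_mul]
      ring
    rw [split, hxSu, mul_zero, add_zero]
  have hquady : quadC C y = (∑ i, D i) - quadC (Smat C x) y := by
    have h1 := hquadS y
    have h2 : ∑ i, D i * Complex.normSq (y i) = ∑ i, D i :=
      Finset.sum_congr rfl fun i _ => by
        rw [show Complex.normSq (y i) = 1 from by rw [← Complex.sq_norm, hy i, one_pow], mul_one]
    rw [h2] at h1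
    linarith
  have hSy0 : 0 ≤ quadC (Smat C x) y := by
    rw [hSu_eq]
    by_cases hu0 : u = 0
    · have h0 : quadC (Smat C x) u = 0 := by
        rw [hu0]
        simp [quadC]
      rw [h0]
    · exact (partA u hu0 hu_orth).le
  rw [hquadCx]
  linarith [hquady, hSy0]
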